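/- Fix an integer n ≥ 1 and reals R > 0 and D with 0 < D < R², and define δ(r) = (r² + R² − D)/(2rR) for r > 0. Then for every r in the open interval (R − √D, R + √D) one has δ(r) ∈ (0,1), and sup_{r ∈ (R−√D, R+√D)} h_{n/2}(δ(r)) = h_{n/2}(√(1 − D/R²)), the supremum being attained at r = √(R² − D), where δ(√(R² − D)) = √(1 − D/R²). -/

import Mathlib

open MeasureTheory Real Filter Set
open scoped ENNReal NNReal Topology

noncomputable section

/-- The modified Bessel function of the first kind `I_ν(t)`. -/
def besselI (ν t : ℝ) : ℝ :=
  ∑' m : ℕ, (t / 2) ^ (2 * (m : ℝ) + ν) / ((m.factorial : ℝ) * Real.Gamma ((m : ℝ) + ν + 1))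

/-- The ratio `f_ν(t) = I_ν(t) / I_{ν-1}(t)`. -/
def besselRatio (ν t : ℝ) : ℝ := besselI ν t / besselI (ν - 1) t

/-- The inverse `f_ν⁻¹ : (0,1) → (0,∞)` of the strictly increasing bijection
`f_ν : (0,∞) → (0,1)`. -/
def besselRatioInv (ν y : ℝ) : ℝ := Function.invFunOn (besselRatio ν) (Set.Ioi 0) y

/-- The function `ξ_ν(t) = -t f_ν(t) + log((2π)^ν I_{ν-1}(t) / t^{ν-1})`. -/
def xiFun (ν t : ℝ) : ℝ :=
  -t * besselRatio ν t + Real.log ((2 * π) ^ ν * besselI (ν - 1) t / t ^ (ν - 1))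

/-- The function `h_ν(t) = ξ_ν(f_ν⁻¹(t))`, for `t ∈ (0,1)`. -/
def hFun (ν t : ℝ) : ℝ := xiFun ν (besselRatioInv ν t)

/-- Surface area of the unit `(n-1)`-sphere in `ℝⁿ`: `S_{n-1} = 2 π^{n/2} / Γ(n/2)`. -/
def surfaceArea (n : ℕ) : ℝ := 2 * π ^ ((n : ℝ) / 2) / Real.Gamma ((n : ℝ) / 2)

/-- `n`-dimensional Euclidean space. -/
abbrev EucSp (n : ℕ) := EuclideanSpace ℝ (Fin n)

/-- The uniform (normalized rotation-invariant) probability distribution on the sphere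
`S^{n-1}(R) = {x ∈ ℝⁿ : ‖x‖ = R}`; for `R = 0` it is the point mass at the origin. -/
def sphereUniform (n : ℕ) (R : ℝ) : Measure (EucSp n) :=
  ((volume : Measure (EucSp n)).toSphere Set.univ)⁻¹ •
    Measure.map (fun x : Metric.sphere (0 : EucSp n) 1 => R • (x : EucSp n))
      (volume : Measure (EucSp n)).toSphere

/-- Kullback-Leibler divergence `KL(μ‖ν)`, with value `∞` unless `μ ≪ ν` and the
log-likelihood ratio is `μ`-integrable. -/
def klDiv {Ω : Type*} [MeasurableSpace Ω] (μ ν : Measure Ω) : ℝ≥0∞ :=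
  open scoped Classical in
  if μ ≪ ν ∧ Integrable (llr μ ν) μ then ENNReal.ofReal (∫ x, llr μ ν x ∂μ) else ⊤

/-- The rate-distortion function `R_n(D;R)` of the uniform distribution on `S^{n-1}(R)`
under squared error distortion: the infimum of the mutual information `I(X̂;X)` over all
joint laws `π` of pairs `(X̂, X)` of `ℝⁿ`-valued random vectors such that `X ∼ μ_R` and
`E[‖X̂ - X‖²] ≤ D`. -/
def rateDistortion (n : ℕ) (D R : ℝ) : ℝ≥0∞ :=
  ⨅ (P : Measure (EucSp n × EucSp n)) (_ : IsProbabilityMeasure P)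
    (_ : Measure.map Prod.snd P = sphereUniform n R)
    (_ : ∫⁻ y, ENNReal.ofReal (‖y.1 - y.2‖ ^ (2:ℕ)) ∂P ≤ ENNReal.ofReal D),
    klDiv P ((Measure.map Prod.fst P).prod (Measure.map Prod.snd P))


namespace RDAux

/-- coefficients of the auxiliary entire series -/
def gc (μ : ℝ) (m : ℕ) : ℝ := 1 / (m.factorial * Real.Gamma (m + μ + 1))

def gf (μ x : ℝ) : ℝ := ∑' m : ℕ, gc μ m * x ^ m

lemma gc_pos {μ : ℝ} (hμ : -1 < μ) (m : ℕ) : 0 < gc μ m := by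
  have h0 : (0:ℝ) ≤ m := Nat.cast_nonneg m
  apply div_pos one_pos
  exact mul_pos (by exact_mod_cast m.factorial_pos) (Real.Gamma_pos_of_pos (by linarith))

lemma gc_succ {μ : ℝ} (hμ : -1 < μ) (m : ℕ) :
    gc μ (m+1) = gc μ m / (((m:ℝ)+1) * ((m:ℝ)+μ+1)) := by
  have h0 : (0:ℝ) ≤ m := Nat.cast_nonneg m
  have h1 : (0:ℝ) < (m:ℝ)+μ+1 := by linarith
  have h2 : ((m+1:ℕ):ℝ) + μ + 1 = ((m:ℝ) + μ + 1) + 1 := by push_cast; ring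
  have h3 : Real.Gamma (((m+1:ℕ):ℝ) + μ + 1) = ((m:ℝ)+μ+1) * Real.Gamma ((m:ℝ)+μ+1) := by
    rw [h2, Real.Gamma_add_one (ne_of_gt h1)]
  unfold gc
  rw [h3, Nat.factorial_succ]
  have h4 : (0:ℝ) < Real.Gamma ((m:ℝ)+μ+1) := Real.Gamma_pos_of_pos (by linarith)
  have h5 : (0:ℝ) < (m.factorial : ℝ) := by exact_mod_cast m.factorial_pos
  push_cast
  field_simp

lemma gc_deriv_id (μ : ℝ) (m : ℕ) : gc (μ+1) m = ((m:ℝ)+1) * gc μ (m+1) := by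
  have h : ((m+1:ℕ):ℝ) + μ + 1 = (m:ℝ) + (μ + 1) + 1 := by push_cast; ring
  unfold gc
  rw [h, Nat.factorial_succ]
  push_cast
  rcases eq_or_ne (Real.Gamma ((m:ℝ) + (μ+1) + 1)) 0 with h0 | h0
  · simp [h0]
  · field_simp

lemma gc_down {μ : ℝ} (hμ : 0 < μ) (m : ℕ) : gc (μ-1) m = ((m:ℝ)+μ) * gc μ m := by
  have h0 : (0:ℝ) ≤ m := Nat.cast_nonneg m
  have h1 : (0:ℝ) < (m:ℝ)+μ := by linarith
  have h2 : (m:ℝ) + μ + 1 = ((m:ℝ) + μ) + 1 := by ring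
  have h3 : Real.Gamma ((m:ℝ)+μ+1) = ((m:ℝ)+μ) * Real.Gamma ((m:ℝ)+μ) := by
    rw [h2, Real.Gamma_add_one (ne_of_gt h1)]
  have h4 : (m:ℝ) + (μ-1) + 1 = (m:ℝ) + μ := by ring
  have h5 : (0:ℝ) < Real.Gamma ((m:ℝ)+μ) := Real.Gamma_pos_of_pos h1
  have h6 : (0:ℝ) < (m.factorial : ℝ) := by exact_mod_cast m.factorial_pos
  unfold gc
  rw [h4, h3]
  field_simp

lemma summable_gc {μ : ℝ} (hμ : -1 < μ) (x : ℝ) : Summable (fun m => gc μ m * x ^ m) := by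
  apply summable_of_ratio_norm_eventually_le (r := 1/2) (by norm_num)
  obtain ⟨N₁, hN₁⟩ := exists_nat_ge (2 * |x|)
  filter_upwards [eventually_ge_atTop N₁, eventually_ge_atTop 1] with m hm hm1
  have hmr : (2:ℝ) * |x| ≤ (m:ℝ) := le_trans hN₁ (by exact_mod_cast hm)
  have hm1r : (1:ℝ) ≤ (m:ℝ) := by exact_mod_cast hm1
  have h1 : (0:ℝ) < (m:ℝ)+1 := by linarith
  have h2 : (0:ℝ) < (m:ℝ)+μ+1 := by linarith
  have hgc : 0 < gc μ m := gc_pos hμ m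
  rw [gc_succ hμ m, Real.norm_eq_abs, Real.norm_eq_abs, pow_succ]
  have e1 : |gc μ m / (((m:ℝ)+1) * ((m:ℝ)+μ+1)) * (x^m * x)|
      = (gc μ m * |x^m|) * (|x| / (((m:ℝ)+1) * ((m:ℝ)+μ+1))) := by
    rw [abs_mul, abs_div, abs_mul, abs_of_pos hgc, abs_of_pos h1, abs_of_pos h2, abs_mul]
    ring
  rw [e1]
  have key : |x| / (((m:ℝ)+1) * ((m:ℝ)+μ+1)) ≤ 1/2 := by
    rw [div_le_div_iff₀ (mul_pos h1 h2) (by norm_num)]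
    have : (1:ℝ) ≤ (m:ℝ)+μ+1 := by linarith
    nlinarith [abs_nonneg x]
  have hnn : (0:ℝ) ≤ gc μ m * |x ^ m| := mul_nonneg hgc.le (abs_nonneg _)
  calc (gc μ m * |x ^ m|) * (|x| / (((m:ℝ)+1) * ((m:ℝ)+μ+1)))
      ≤ (gc μ m * |x ^ m|) * (1/2) := mul_le_mul_of_nonneg_left key hnn
    _ = 1/2 * (gc μ m * |x ^ m|) := by ring
    _ = 1/2 * |gc μ m * x ^ m| := by rw [abs_mul, abs_of_pos hgc]

lemma gf_zero (μ : ℝ) : gf μ 0 = 1 / Real.Gamma (μ+1) := by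
  rw [gf, tsum_eq_single 0]
  · simp [gc]
  · intro m hm
    simp [zero_pow hm]

lemma gf_pos {μ : ℝ} (hμ : -1 < μ) {x : ℝ} (hx : 0 ≤ x) : 0 < gf μ x := by
  apply Summable.tsum_pos (summable_gc hμ x) (fun m => mul_nonneg (gc_pos hμ m).le (pow_nonneg hx m)) 0
  simpa using gc_pos hμ 0

lemma hasDerivAt_gf {μ : ℝ} (hμ : -1 < μ) (x : ℝ) :
    HasDerivAt (gf μ) (gf (μ+1) x) x := by
  have hμ1 : (-1:ℝ) < μ + 1 := by linarith
  have hxK : x ∈ Metric.ball (0:ℝ) (|x|+1) := by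
    simp only [Metric.mem_ball, dist_zero_right, Real.norm_eq_abs]; linarith
  apply hasDerivAt_of_tendstoUniformlyOn (l := atTop)
    (f := fun (n:ℕ) (y:ℝ) => ∑ m ∈ Finset.range (n+1), gc μ m * y ^ m)
    (f' := fun (n:ℕ) (y:ℝ) => ∑ k ∈ Finset.range n, gc (μ+1) k * y ^ k)
    Metric.isOpen_ball ?_ ?_ ?_ hxK
  · have hu : Summable (fun k => |gc (μ+1) k * (|x|+1) ^ k|) := (summable_gc hμ1 (|x|+1)).abs
    have hb : ∀ (k : ℕ) (y : ℝ), y ∈ Metric.ball (0:ℝ) (|x|+1) →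
        ‖gc (μ+1) k * y ^ k‖ ≤ |gc (μ+1) k * (|x|+1) ^ k| := by
      intro k y hy
      have hy' : |y| ≤ |x|+1 := le_of_lt (by simpa [Real.norm_eq_abs] using mem_ball_zero_iff.mp hy)
      have h1 : (0:ℝ) ≤ |x|+1 := by positivity
      rw [Real.norm_eq_abs, abs_mul, abs_mul, abs_pow, abs_pow, abs_of_nonneg h1]
      exact mul_le_mul_of_nonneg_left (pow_le_pow_left₀ (abs_nonneg y) hy' k) (abs_nonneg _)
    exact tendstoUniformlyOn_tsum_nat hu hb
  · apply Eventually.of_forall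
    intro n y _
    have h : HasDerivAt (fun y => ∑ m ∈ Finset.range (n+1), gc μ m * y ^ m)
        (∑ m ∈ Finset.range (n+1), gc μ m * ((m:ℝ) * y ^ (m-1))) y :=
      HasDerivAt.fun_sum fun m _ => (hasDerivAt_pow m y).const_mul (gc μ m)
    refine h.congr_deriv ?_
    symm
    rw [Finset.sum_range_succ']
    simp only [Nat.cast_zero, zero_mul, mul_zero, add_zero, Nat.cast_ofNat]
    apply Finset.sum_congr rfl
    intro k _
    rw [gc_deriv_id μ k]
    push_cast
    ring
  · intro y _
    have hs := (summable_gc hμ y).hasSum.tendsto_sum_nat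
    exact hs.comp (tendsto_add_atTop_nat 1)

lemma continuous_gf {μ : ℝ} (hμ : -1 < μ) : Continuous (gf μ) := by
  have h : Differentiable ℝ (gf μ) := fun x => (hasDerivAt_gf hμ x).differentiableAt
  exact h.continuous

lemma gf_rec {μ : ℝ} (hμ : 0 < μ) (x : ℝ) :
    gf (μ-1) x = x * gf (μ+1) x + μ * gf μ x := by
  have hμ' : (-1:ℝ) < μ := by linarith
  have hμ1 : (-1:ℝ) < μ + 1 := by linarith
  set e : ℕ → ℝ := fun m => (m:ℝ) * gc μ m * x ^ m with he
  have he_succ : ∀ m:ℕ, e (m+1) = (gc (μ+1) m * x ^ m) * x := by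
    intro m
    simp only [he]
    rw [gc_deriv_id μ m]
    push_cast
    ring
  have hes : Summable e := by
    rw [← summable_nat_add_iff 1]
    simpa [he_succ] using (summable_gc hμ1 x).mul_right x
  have h1 : x * gf (μ+1) x = ∑' m, e m := by
    rw [gf, ← tsum_mul_left, Summable.tsum_eq_zero_add hes]
    simp only [he, Nat.cast_zero, zero_mul, zero_add]
    exact tsum_congr fun m => by rw [gc_deriv_id μ m]; push_cast; ring
  have h2 : gf (μ-1) x = ∑' m, (e m + μ * (gc μ m * x ^ m)) := by
    rw [gf]
    apply tsum_congr
    intro m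
    rw [gc_down hμ m]
    simp only [he]
    ring
  rw [h2, Summable.tsum_add hes ((summable_gc hμ' x).mul_left μ), ← h1, tsum_mul_left]
  rfl

lemma sqrt_gf_le {μ : ℝ} (hμ : 1 ≤ μ) {s : ℝ} (hs : 0 ≤ s) :
    s * gf μ (s^2) ≤ gf (μ-1) (s^2) := by
  have hμ0 : (0:ℝ) < μ := by linarith
  have hμ' : (-1:ℝ) < μ := by linarith
  have hμ1' : (-1:ℝ) < μ - 1 := by linarith
  set b : ℕ → ℝ := fun m => gc (μ-1) m * (s^2) ^ m with hb
  have hbs : Summable b := summable_gc hμ1' _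
  have hbs' : Summable (fun m => b (m+1)) := (summable_nat_add_iff 1).2 hbs
  have hterm : ∀ m, s * (gc μ m * (s^2)^m) ≤ (b m + b (m+1)) / 2 := by
    intro m
    have h0 : (0:ℝ) ≤ m := Nat.cast_nonneg m
    have hd : gc (μ-1) m = ((m:ℝ)+μ) * gc μ m := gc_down hμ0 m
    have hd1 : ((m:ℝ)+1) * gc (μ-1) (m+1) = gc μ m := by
      rw [gc_down hμ0 (m+1), gc_succ hμ' m]
      push_cast
      have h1 : (0:ℝ) < ((m:ℝ)+1) * ((m:ℝ)+μ+1) := by nlinarith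
      field_simp
      ring
    have hX : (0:ℝ) ≤ (s^2)^m := by positivity
    have hg : (0:ℝ) ≤ gc (μ-1) (m+1) := (gc_pos hμ1' (m+1)).le
    have hbm1 : b (m+1) = gc (μ-1) (m+1) * (s^2)^m * s^2 := by
      simp only [hb, pow_succ]; ring
    rw [hbm1]
    simp only [hb, hd]
    rw [← hd1]
    nlinarith [mul_nonneg (mul_nonneg hg hX) (sq_nonneg (((m:ℝ)+1) - s)),
      mul_nonneg (mul_nonneg hg hX) (mul_nonneg h0 (by linarith : (0:ℝ) ≤ μ - 1)),
      mul_nonneg hg hX]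
  have hsum1 : Summable (fun m => s * (gc μ m * (s^2)^m)) := (summable_gc hμ' _).mul_left s
  have hsum2 : Summable (fun m => (b m + b (m+1)) / 2) := ((hbs.add hbs').div_const 2)
  calc s * gf μ (s^2) = ∑' m, s * (gc μ m * (s^2)^m) := by rw [gf, ← tsum_mul_left]
    _ ≤ ∑' m, (b m + b (m+1)) / 2 := Summable.tsum_le_tsum hterm hsum1 hsum2
    _ = (∑' m, b m + ∑' m, b (m+1)) / 2 := by
        rw [tsum_div_const, Summable.tsum_add hbs hbs']
    _ ≤ gf (μ-1) (s^2) := by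
        have h0 : ∑' m, b m = b 0 + ∑' m, b (m+1) := Summable.tsum_eq_zero_add hbs
        have hb0 : 0 ≤ b 0 := mul_nonneg (gc_pos hμ1' 0).le (by positivity)
        have : gf (μ-1) (s^2) = ∑' m, b m := rfl
        rw [this]
        linarith


lemma besselI_eq (μ : ℝ) {t : ℝ} (ht : 0 < t) :
    besselI μ t = (t/2) ^ μ * gf μ ((t/2)^2) := by
  have h2 : (0:ℝ) < t/2 := by linarith
  rw [besselI, gf, ← tsum_mul_left]
  apply tsum_congr; intro m
  have hexp : (t/2) ^ (2*(m:ℝ) + μ) = ((t/2)^2)^m * (t/2)^μ := by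
    rw [Real.rpow_add h2]
    congr 1
    rw [show (2*(m:ℝ)) = ((2*m : ℕ):ℝ) by push_cast; ring, Real.rpow_natCast, pow_mul]
  rw [hexp]
  simp only [gc, div_eq_mul_inv, one_mul, one_div]
  ring

/-- `A = I_{ν-1}` in series form -/
def Af (ν t : ℝ) : ℝ := (t/2) ^ (ν-1) * gf (ν-1) ((t/2)^2)
/-- `B = I_ν` in series form -/
def Bf (ν t : ℝ) : ℝ := (t/2) ^ ν * gf ν ((t/2)^2)

variable {ν t : ℝ}

lemma besselI_eq_Af (hν : 1/2 ≤ ν) (ht : 0 < t) : besselI (ν-1) t = Af ν t := besselI_eq _ ht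
lemma besselI_eq_Bf (hν : 1/2 ≤ ν) (ht : 0 < t) : besselI ν t = Bf ν t := besselI_eq _ ht

lemma hν1 (hν : 1/2 ≤ ν) : (-1:ℝ) < ν - 1 := by linarith
lemma hν0 (hν : 1/2 ≤ ν) : (-1:ℝ) < ν := by linarith
lemma hνp (hν : 1/2 ≤ ν) : (0:ℝ) < ν := by linarith

lemma Af_pos (hν : 1/2 ≤ ν) (ht : 0 < t) : 0 < Af ν t :=
  mul_pos (Real.rpow_pos_of_pos (by linarith) _) (gf_pos (hν1 hν) (by positivity))

lemma Bf_pos (hν : 1/2 ≤ ν) (ht : 0 < t) : 0 < Bf ν t :=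
  mul_pos (Real.rpow_pos_of_pos (by linarith) _) (gf_pos (hν0 hν) (by positivity))

lemma rpow_shift (ht : 0 < t) (c : ℝ) : (t/2) ^ c = (t/2) ^ (c-1) * (t/2) := by
  rw [← Real.rpow_add_one (by positivity : (t/2:ℝ) ≠ 0) (c-1)]
  norm_num

/-- derivative of `t ↦ (t/2)^c` -/
lemma hasDerivAt_upow (ht : 0 < t) (c : ℝ) :
    HasDerivAt (fun t : ℝ => (t/2) ^ c) (c * (t/2) ^ (c-1) * (1/2)) t := by
  have h : HasDerivAt (fun t : ℝ => t/2) (1/2) t := (hasDerivAt_id t).div_const 2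
  convert h.rpow_const (Or.inl (by positivity : (t/2:ℝ) ≠ 0)) using 1
  ring

/-- derivative of `t ↦ gf μ ((t/2)^2)` -/
lemma hasDerivAt_gf_comp (hμ : (-1:ℝ) < μ) (ht : 0 < t) :
    HasDerivAt (fun t : ℝ => gf μ ((t/2)^2)) (gf (μ+1) ((t/2)^2) * (t/2)) t := by
  have hinner : HasDerivAt (fun t : ℝ => ((t/2)^2 : ℝ)) (t/2) t := by
    have h : HasDerivAt (fun t : ℝ => t/2) (1/2) t := (hasDerivAt_id t).div_const 2
    have := h.pow 2
    refine this.congr_deriv ?_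
    symm
    push_cast
    ring
  exact (hasDerivAt_gf hμ ((t/2)^2)).comp t hinner

lemma hasDerivAt_Bf (hν : 1/2 ≤ ν) (ht : 0 < t) :
    HasDerivAt (Bf ν) (Af ν t - (ν/t) * Bf ν t) t := by
  have h := (hasDerivAt_upow ht ν).mul (hasDerivAt_gf_comp (hν0 hν) ht)
  refine h.congr_deriv ?_
  symm
  rw [Af, Bf, gf_rec (hνp hν) ((t/2)^2), rpow_shift ht ν]
  have ht0 : t ≠ 0 := ne_of_gt ht
  field_simp
  ring

lemma hasDerivAt_Af (hν : 1/2 ≤ ν) (ht : 0 < t) :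
    HasDerivAt (Af ν) (Bf ν t + ((ν-1)/t) * Af ν t) t := by
  have h := (hasDerivAt_upow ht (ν-1)).mul (hasDerivAt_gf_comp (hν1 hν) ht)
  have hs : ν - 1 + 1 = ν := by ring
  rw [hs] at h
  refine h.congr_deriv ?_
  symm
  rw [Af, Bf, rpow_shift ht ν, rpow_shift ht (ν-1)]
  have ht0 : t ≠ 0 := ne_of_gt ht
  field_simp
  ring

/-- Wronskian-type auxiliary function. -/
def Ff (ν t : ℝ) : ℝ := t * ((Af ν t)^2 - (Bf ν t)^2) - (2*ν - 1) * (Af ν t * Bf ν t)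

lemma hasDerivAt_Ff (hν : 1/2 ≤ ν) (ht : 0 < t) :
    HasDerivAt (Ff ν) ((2*ν - 1) * (Af ν t * Bf ν t) / t) t := by
  have hA := hasDerivAt_Af hν ht
  have hB := hasDerivAt_Bf hν ht
  have h := ((hasDerivAt_id t).mul ((hA.pow 2).sub (hB.pow 2))).sub
    ((hA.mul hB).const_mul (2*ν - 1))
  refine h.congr_deriv ?_
  symm
  simp only [id, Pi.sub_apply, Pi.pow_apply]
  have ht0 : t ≠ 0 := ne_of_gt ht
  field_simp
  ring

/-- The rescaled Wronskian. -/
def phif (ν t : ℝ) : ℝ :=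
  2 * (gf (ν-1) ((t/2)^2))^2 - 2 * ((t/2)^2) * (gf ν ((t/2)^2))^2
    - (2*ν-1) * (gf (ν-1) ((t/2)^2) * gf ν ((t/2)^2))

lemma Ff_eq_phif (ht : 0 < t) : Ff ν t = (t/2)^(2*ν-1) * phif ν t := by
  have hu : (0:ℝ) < t/2 := by linarith
  have h1 : (t/2:ℝ)^ν = (t/2)^(ν-1) * (t/2) := rpow_shift ht ν
  have h2 : (t/2:ℝ)^(2*ν-1) = (t/2)^(ν-1) * (t/2)^(ν-1) * (t/2) := by
    rw [show 2*ν-1 = ((ν-1)+(ν-1))+1 by ring, Real.rpow_add_one (ne_of_gt hu),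
      Real.rpow_add hu]
  rw [Ff, Af, Bf, phif, h1, h2]
  ring

lemma continuous_phif (hν : 1/2 ≤ ν) : Continuous (phif ν) := by
  have hc : Continuous (fun t : ℝ => ((t/2)^2 : ℝ)) := by continuity
  have h1 : Continuous (fun t : ℝ => gf (ν-1) ((t/2)^2)) := (continuous_gf (hν1 hν)).comp hc
  have h2 : Continuous (fun t : ℝ => gf ν ((t/2)^2)) := (continuous_gf (hν0 hν)).comp hc
  unfold phif
  fun_prop

lemma phif_zero_pos (hν : 1/2 ≤ ν) : 0 < phif ν 0 := by
  have hνp' : (0:ℝ) < ν := hνp hν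
  have hΓ : 0 < Real.Gamma ν := Real.Gamma_pos_of_pos hνp'
  have hΓ1 : Real.Gamma (ν + 1) = ν * Real.Gamma ν := Real.Gamma_add_one (ne_of_gt hνp')
  have h1 : phif ν 0 = 2 * (1 / Real.Gamma ν)^2
      - (2*ν-1) * ((1 / Real.Gamma ν) * (1 / Real.Gamma (ν+1))) := by
    have e0 : ((0:ℝ)/2)^2 = 0 := by norm_num
    rw [phif, e0, gf_zero, gf_zero, show ν - 1 + 1 = ν by ring]
    ring
  rw [h1, hΓ1]
  have : 2 * (1 / Real.Gamma ν)^2 - (2*ν-1) * ((1 / Real.Gamma ν) * (1 / (ν * Real.Gamma ν)))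
      = 1 / (ν * (Real.Gamma ν)^2) := by
    field_simp
    ring
  rw [this]
  positivity

lemma Ff_nonneg (hν : 1/2 ≤ ν) (ht : 0 < t) : 0 ≤ Ff ν t := by
  -- φ is positive near 0
  have hev : ∀ᶠ s in 𝓝 (0:ℝ), 0 < phif ν s :=
    (continuous_phif hν).continuousAt.eventually_mem (Ioi_mem_nhds (phif_zero_pos hν))
  obtain ⟨ε, hε, hball⟩ := Metric.eventually_nhds_iff.mp hev
  -- F monotone on (0,∞)
  have hmono : MonotoneOn (Ff ν) (Set.Ioi 0) := by
    apply monotoneOn_of_deriv_nonneg (convex_Ioi 0)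
    · intro s hs
      exact (hasDerivAt_Ff hν hs).continuousAt.continuousWithinAt
    · intro s hs
      rw [interior_Ioi] at hs
      exact (hasDerivAt_Ff hν hs).differentiableAt.differentiableWithinAt
    · intro s hs
      rw [interior_Ioi] at hs
      rw [(hasDerivAt_Ff hν hs).deriv]
      have hA := Af_pos hν hs
      have hB := Bf_pos hν hs
      have h1 : (0:ℝ) ≤ 2*ν-1 := by linarith
      exact div_nonneg (mul_nonneg h1 (mul_pos hA hB).le) hs.le
  set s := min t (ε/2) with hsdef
  have hs0 : 0 < s := lt_min ht (by linarith)
  have hst : s ≤ t := min_le_left _ _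
  have hsε : dist s 0 < ε := by
    rw [Real.dist_eq, sub_zero, abs_of_pos hs0]
    calc s ≤ ε/2 := min_le_right _ _
      _ < ε := by linarith
  have hφ : 0 < phif ν s := hball hsε
  have hFs : 0 < Ff ν s := by
    rw [Ff_eq_phif hs0]
    exact mul_pos (Real.rpow_pos_of_pos (by linarith) _) hφ
  exact le_trans hFs.le (hmono hs0 ht hst)

/-- The Bessel ratio in series form. -/
def fr (ν t : ℝ) : ℝ := Bf ν t / Af ν t

lemma besselRatio_eq_fr (hν : 1/2 ≤ ν) (ht : 0 < t) : besselRatio ν t = fr ν t := by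
  rw [besselRatio, besselI_eq_Af hν ht, besselI_eq_Bf hν ht, fr]

lemma hasDerivAt_fr (hν : 1/2 ≤ ν) (ht : 0 < t) :
    HasDerivAt (fr ν) ((Ff ν t / t) / (Af ν t)^2) t := by
  have hA := hasDerivAt_Af hν ht
  have hB := hasDerivAt_Bf hν ht
  have hA0 : Af ν t ≠ 0 := ne_of_gt (Af_pos hν ht)
  have h := hB.div hA hA0
  refine h.congr_deriv ?_
  symm
  rw [Ff]
  have ht0 : t ≠ 0 := ne_of_gt ht
  field_simp
  ring

lemma fr_mono (hν : 1/2 ≤ ν) : MonotoneOn (fr ν) (Set.Ioi 0) := by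
  apply monotoneOn_of_deriv_nonneg (convex_Ioi 0)
  · intro s hs
    exact (hasDerivAt_fr hν hs).continuousAt.continuousWithinAt
  · intro s hs
    rw [interior_Ioi] at hs
    exact (hasDerivAt_fr hν hs).differentiableAt.differentiableWithinAt
  · intro s hs
    rw [interior_Ioi] at hs
    rw [(hasDerivAt_fr hν hs).deriv]
    exact div_nonneg (div_nonneg (Ff_nonneg hν hs) hs.le) (sq_nonneg _)

/-- recurrence `A = (2ν/t) B + C`. -/
lemma Af_rec (hν : 1/2 ≤ ν) (ht : 0 < t) :
    Af ν t = (2*ν/t) * Bf ν t + (t/2)^(ν+1) * gf (ν+1) ((t/2)^2) := by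
  have hu : (0:ℝ) < t/2 := by linarith
  have ht0 : t ≠ 0 := ne_of_gt ht
  have h1 : (t/2:ℝ)^ν = (t/2)^(ν-1) * (t/2) := rpow_shift ht ν
  have h2 : (t/2:ℝ)^(ν+1) = (t/2)^(ν-1) * (t/2) * (t/2) := by
    rw [Real.rpow_add_one (ne_of_gt hu) ν, h1]
  rw [Af, Bf, gf_rec (hνp hν) ((t/2)^2), h1, h2]
  field_simp
  ring

lemma Cf_nonneg (hν : 1/2 ≤ ν) (ht : 0 < t) : 0 ≤ (t/2)^(ν+1) * gf (ν+1) ((t/2)^2) := by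
  have : (-1:ℝ) < ν + 1 := by linarith
  exact le_of_lt (mul_pos (Real.rpow_pos_of_pos (by linarith) _) (gf_pos this (by positivity)))

lemma Cf_le_Bf (hν : 1/2 ≤ ν) (ht : 0 < t) :
    (t/2)^(ν+1) * gf (ν+1) ((t/2)^2) ≤ Bf ν t := by
  have hu : (0:ℝ) < t/2 := by linarith
  have h := sqrt_gf_le (μ := ν+1) (by linarith) (le_of_lt hu)
  rw [add_sub_cancel_right] at h
  have h2 : (t/2:ℝ)^(ν+1) = (t/2)^ν * (t/2) := Real.rpow_add_one (ne_of_gt hu) ν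
  rw [Bf, h2]
  calc (t/2)^ν * (t/2) * gf (ν+1) ((t/2)^2) = (t/2)^ν * ((t/2) * gf (ν+1) ((t/2)^2)) := by ring
    _ ≤ (t/2)^ν * gf ν ((t/2)^2) :=
        mul_le_mul_of_nonneg_left h (le_of_lt (Real.rpow_pos_of_pos hu _))

lemma fr_pos (hν : 1/2 ≤ ν) (ht : 0 < t) : 0 < fr ν t :=
  div_pos (Bf_pos hν ht) (Af_pos hν ht)

lemma fr_le (hν : 1/2 ≤ ν) (ht : 0 < t) : fr ν t ≤ t / (2*ν) := by
  have hB := Bf_pos hν ht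
  have hν' := hνp hν
  have hlow : (2*ν/t) * Bf ν t ≤ Af ν t := by
    rw [Af_rec hν ht]
    linarith [Cf_nonneg hν ht]
  have hc : (0:ℝ) < (2*ν/t) * Bf ν t := mul_pos (by positivity) hB
  calc fr ν t ≤ Bf ν t / ((2*ν/t) * Bf ν t) :=
        div_le_div_of_nonneg_left hB.le hc hlow
    _ = t / (2*ν) := by
        field_simp

lemma fr_ge (hν : 1/2 ≤ ν) (ht : 0 < t) : t / (2*ν + t) ≤ fr ν t := by
  have hB := Bf_pos hν ht
  have hA := Af_pos hν ht
  have hν' := hνp hν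
  have hup : Af ν t ≤ ((2*ν + t)/t) * Bf ν t := by
    rw [Af_rec hν ht]
    have := Cf_le_Bf hν ht
    have ht0 : t ≠ 0 := ne_of_gt ht
    have e : ((2*ν + t)/t) * Bf ν t = (2*ν/t) * Bf ν t + Bf ν t := by
      field_simp
    linarith
  calc t / (2*ν + t) = Bf ν t / (((2*ν + t)/t) * Bf ν t) := by
        field_simp
    _ ≤ fr ν t := div_le_div_of_nonneg_left hB.le hA hup

lemma besselRatio_surj (hν : 1/2 ≤ ν) {s : ℝ} (hs : s ∈ Set.Ioo (0:ℝ) 1) :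
    ∃ t ∈ Set.Ioi (0:ℝ), besselRatio ν t = s := by
  obtain ⟨hs0, hs1⟩ := hs
  have hν' := hνp hν
  set t₁ : ℝ := ν * s with ht₁def
  have ht₁ : 0 < t₁ := mul_pos hν' hs0
  set t₂ : ℝ := 2*ν*s/(1-s) + t₁ + 1 with ht₂def
  have h1s : (0:ℝ) < 1 - s := by linarith
  have hX : (0:ℝ) ≤ 2*ν*s/(1-s) := div_nonneg (by positivity) h1s.le
  have ht₂ : t₁ < t₂ := by
    rw [ht₂def]
    linarith
  have ht₂0 : 0 < t₂ := lt_trans ht₁ ht₂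
  have hf1 : fr ν t₁ < s := by
    have := fr_le hν ht₁
    have e : t₁ / (2*ν) = s/2 := by
      rw [ht₁def]
      field_simp
    rw [e] at this
    linarith
  have hf2 : s < fr ν t₂ := by
    have := fr_ge hν ht₂0
    have key : s < t₂ / (2*ν + t₂) := by
      rw [lt_div_iff₀ (by linarith : (0:ℝ) < 2*ν + t₂)]
      have e : t₂ * (1-s) = 2*ν*s + (t₁ + 1) * (1-s) := by
        rw [ht₂def]
        field_simp
        ring
      nlinarith
    linarith
  have hcont : ContinuousOn (fr ν) (Set.Icc t₁ t₂) := by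
    intro u hu
    have hu0 : 0 < u := lt_of_lt_of_le ht₁ hu.1
    exact (hasDerivAt_fr hν hu0).continuousAt.continuousWithinAt
  have hmem : s ∈ Set.Icc (fr ν t₁) (fr ν t₂) := ⟨hf1.le, hf2.le⟩
  obtain ⟨u, hu, hus⟩ := intermediate_value_Icc ht₂.le hcont hmem
  have hu0 : 0 < u := lt_of_lt_of_le ht₁ hu.1
  exact ⟨u, hu0, by rw [besselRatio_eq_fr hν hu0, hus]⟩

/-- `ξ` in series form. -/
def Xi (ν t : ℝ) : ℝ :=
  -t * fr ν t + (ν * Real.log (2*π) + Real.log (Af ν t) - (ν-1) * Real.log t)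

lemma xiFun_eq_Xi (hν : 1/2 ≤ ν) (ht : 0 < t) : xiFun ν t = Xi ν t := by
  have hA := Af_pos hν ht
  have h2π : (0:ℝ) < 2*π := by positivity
  rw [xiFun, Xi, besselRatio_eq_fr hν ht, besselI_eq_Af hν ht]
  congr 1
  rw [Real.log_div (by positivity) (ne_of_gt (Real.rpow_pos_of_pos ht _)),
    Real.log_mul (ne_of_gt (Real.rpow_pos_of_pos h2π _)) (ne_of_gt hA),
    Real.log_rpow h2π, Real.log_rpow ht]

lemma hasDerivAt_Xi (hν : 1/2 ≤ ν) (ht : 0 < t) :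
    HasDerivAt (Xi ν) (-t * ((Ff ν t / t) / (Af ν t)^2)) t := by
  have hA := Af_pos hν ht
  have hA0 : Af ν t ≠ 0 := ne_of_gt hA
  have ht0 : t ≠ 0 := ne_of_gt ht
  have h1 : HasDerivAt (fun t => -t * fr ν t) (-1 * fr ν t + -t * ((Ff ν t / t) / (Af ν t)^2)) t :=
    ((hasDerivAt_id t).neg).mul (hasDerivAt_fr hν ht)
  have h2 : HasDerivAt (fun t => Real.log (Af ν t))
      ((Bf ν t + ((ν-1)/t) * Af ν t) / Af ν t) t := (hasDerivAt_Af hν ht).log hA0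
  have h3 : HasDerivAt (fun t => (ν-1) * Real.log t) ((ν-1) * t⁻¹) t :=
    (Real.hasDerivAt_log ht0).const_mul (ν-1)
  have h4 : HasDerivAt (fun t : ℝ => ν * Real.log (2*π)) 0 t := hasDerivAt_const t _
  have h := h1.add ((h4.add h2).sub h3)
  refine h.congr_deriv ?_
  symm
  rw [fr]
  field_simp
  ring

lemma xiFun_anti (hν : 1/2 ≤ ν) : AntitoneOn (xiFun ν) (Set.Ioi 0) := by
  have hXi : AntitoneOn (Xi ν) (Set.Ioi 0) := by
    apply antitoneOn_of_deriv_nonpos (convex_Ioi 0)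
    · intro s hs
      exact (hasDerivAt_Xi hν hs).continuousAt.continuousWithinAt
    · intro s hs
      rw [interior_Ioi] at hs
      exact (hasDerivAt_Xi hν hs).differentiableAt.differentiableWithinAt
    · intro s hs
      rw [interior_Ioi] at hs
      rw [(hasDerivAt_Xi hν hs).deriv]
      have h1 : 0 ≤ (Ff ν s / s) / (Af ν s)^2 :=
        div_nonneg (div_nonneg (Ff_nonneg hν hs) hs.le) (sq_nonneg _)
      have : -s * ((Ff ν s / s) / (Af ν s)^2) ≤ 0 := by
        apply mul_nonpos_of_nonpos_of_nonneg _ h1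
        linarith [hs.out]
      linarith
  exact hXi.congr (fun u hu => (xiFun_eq_Xi hν hu).symm)

lemma besselRatio_mono (hν : 1/2 ≤ ν) : MonotoneOn (besselRatio ν) (Set.Ioi 0) :=
  (fr_mono hν).congr (fun u hu => (besselRatio_eq_fr hν hu).symm)

/-- Key inequality: `hFun` is antitone on `(0,1)`. -/
lemma hFun_le (hν : 1/2 ≤ ν) {s₀ s : ℝ} (h₀ : s₀ ∈ Set.Ioo (0:ℝ) 1)
    (hs : s ∈ Set.Ioo (0:ℝ) 1) (hle : s₀ ≤ s) : hFun ν s ≤ hFun ν s₀ := by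
  obtain ⟨t₀, ht₀, he₀⟩ := besselRatio_surj hν h₀
  obtain ⟨t₁, ht₁, he₁⟩ := besselRatio_surj hν hs
  have m₀ : besselRatioInv ν s₀ ∈ Set.Ioi (0:ℝ) :=
    Function.invFunOn_mem (f := besselRatio ν) ⟨t₀, ht₀, he₀⟩
  have e₀ : besselRatio ν (besselRatioInv ν s₀) = s₀ :=
    Function.invFunOn_eq (f := besselRatio ν) ⟨t₀, ht₀, he₀⟩
  have m₁ : besselRatioInv ν s ∈ Set.Ioi (0:ℝ) :=
    Function.invFunOn_mem (f := besselRatio ν) ⟨t₁, ht₁, he₁⟩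
  have e₁ : besselRatio ν (besselRatioInv ν s) = s :=
    Function.invFunOn_eq (f := besselRatio ν) ⟨t₁, ht₁, he₁⟩
  rcases eq_or_lt_of_le hle with rfl | hlt
  · exact le_refl _
  · have hord : besselRatioInv ν s₀ ≤ besselRatioInv ν s := by
      by_contra hcon
      push_neg at hcon
      have := besselRatio_mono hν m₁ m₀ hcon.le
      rw [e₀, e₁] at this
      exact absurd (lt_of_lt_of_le hlt this) (lt_irrefl _)
    exact xiFun_anti hν m₀ m₁ hord

end RDAux

/-- **Lemma (optimization over the reconstruction radius).** For `n ≥ 1`, `R > 0` and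
`0 < D < R²`, with `δ(r) = (r² + R² - D)/(2rR)`: `δ(r) ∈ (0,1)` on
`(R - √D, R + √D)`, and `sup_{r ∈ (R-√D, R+√D)} h_{n/2}(δ(r)) = h_{n/2}(√(1 - D/R²))`,
attained at `r = √(R² - D)`, where `δ(√(R² - D)) = √(1 - D/R²)`. -/
theorem sup_hFun_delta (n : ℕ) (hn : 1 ≤ n) (R D : ℝ) (hR : 0 < R) (hD : 0 < D)
    (hDR : D < R ^ 2) :
    (∀ r ∈ Set.Ioo (R - Real.sqrt D) (R + Real.sqrt D),
        (r ^ 2 + R ^ 2 - D) / (2 * r * R) ∈ Set.Ioo (0:ℝ) 1) ∧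
      Real.sqrt (R ^ 2 - D) ∈ Set.Ioo (R - Real.sqrt D) (R + Real.sqrt D) ∧
      ((Real.sqrt (R ^ 2 - D)) ^ 2 + R ^ 2 - D) / (2 * Real.sqrt (R ^ 2 - D) * R) =
        Real.sqrt (1 - D / R ^ 2) ∧
      IsGreatest
        ((fun r => hFun ((n : ℝ) / 2) ((r ^ 2 + R ^ 2 - D) / (2 * r * R))) ''
          Set.Ioo (R - Real.sqrt D) (R + Real.sqrt D))
        (hFun ((n : ℝ) / 2) (Real.sqrt (1 - D / R ^ 2))) := by
  have hν : (1:ℝ)/2 ≤ (n:ℝ)/2 := by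
    have : (1:ℝ) ≤ (n:ℝ) := by exact_mod_cast hn
    linarith
  have hsD0 : 0 < Real.sqrt D := Real.sqrt_pos.2 hD
  have hsDsq : Real.sqrt D ^ 2 = D := Real.sq_sqrt hD.le
  have hsD : Real.sqrt D < R := by
    have h := Real.sqrt_lt_sqrt hD.le hDR
    rwa [Real.sqrt_sq hR.le] at h
  have hRD : 0 < R^2 - D := by linarith
  have hr₀sq : Real.sqrt (R^2 - D) ^ 2 = R^2 - D := Real.sq_sqrt hRD.le
  have hr₀pos : 0 < Real.sqrt (R^2 - D) := Real.sqrt_pos.2 hRD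
  set r₀ := Real.sqrt (R^2 - D)
  -- part 1 : δ(r) ∈ (0,1)
  have hδ : ∀ r ∈ Set.Ioo (R - Real.sqrt D) (R + Real.sqrt D),
      (r^2 + R^2 - D)/(2*r*R) ∈ Set.Ioo (0:ℝ) 1 := by
    intro r hr
    obtain ⟨hr1, hr2⟩ := hr
    have hr0 : 0 < r := by linarith
    constructor
    · apply div_pos _ (by positivity)
      nlinarith
    · rw [div_lt_one (by positivity)]
      nlinarith
  -- part 2 : r₀ in the interval
  have hmem : r₀ ∈ Set.Ioo (R - Real.sqrt D) (R + Real.sqrt D) := by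
    constructor
    · have hlt : (R - Real.sqrt D)^2 < r₀^2 := by nlinarith
      exact lt_of_pow_lt_pow_left₀ 2 hr₀pos.le hlt
    · have hlt : r₀ < R := by
        have : r₀^2 < R^2 := by nlinarith
        exact lt_of_pow_lt_pow_left₀ 2 hR.le this
      linarith
  -- the minimal value of δ
  have hs₀R : Real.sqrt (1 - D/R^2) = r₀ / R := by
    rw [show 1 - D/R^2 = (r₀/R)^2 by rw [div_pow, hr₀sq]; field_simp]
    exact Real.sqrt_sq (by positivity)
  -- part 3 : δ(r₀) = √(1 - D/R²)
  have hs₀eq : (r₀^2 + R^2 - D)/(2*r₀*R) = Real.sqrt (1 - D/R^2) := by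
    rw [hs₀R, show r₀^2 + R^2 - D = 2*r₀^2 by linarith, pow_two]
    rw [div_eq_div_iff (by positivity) (ne_of_gt hR)]
    ring
  -- s₀ ∈ (0,1)
  have hs₀mem : Real.sqrt (1 - D/R^2) ∈ Set.Ioo (0:ℝ) 1 := by
    constructor
    · apply Real.sqrt_pos.2
      have : D / R^2 < 1 := (div_lt_one (by positivity)).2 hDR
      linarith
    · have h1 : (1:ℝ) - D/R^2 < 1 := by
        have : 0 < D / R^2 := by positivity
        linarith
      have h2 := Real.sqrt_lt_sqrt (by nlinarith [Real.sq_sqrt (show (0:ℝ) ≤ 1 - D/R^2 by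
        nlinarith [(div_lt_one (show (0:ℝ) < R^2 by positivity)).2 hDR])] : (0:ℝ) ≤ 1 - D/R^2) h1
      rwa [Real.sqrt_one] at h2
  refine ⟨hδ, hmem, hs₀eq, ⟨r₀, hmem, by simp only []; rw [hs₀eq]⟩, ?_⟩
  rintro x ⟨r, hrmem, rfl⟩
  refine RDAux.hFun_le hν hs₀mem (hδ r hrmem) ?_
  -- √(1 - D/R²) ≤ δ(r)
  have hr0 : 0 < r := by linarith [hrmem.1]
  rw [hs₀R, div_le_div_iff₀ hR (by positivity)]
  nlinarith [sq_nonneg (r - r₀)]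


end
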